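/- A finite group G of order n is cyclic if and only if for every positive divisor d of n there exists a subgroup H of G such that the exponent of G relative to H equals d, i.e., d is the least positive integer m such that xᵐ ∈ H for all x ∈ G. -/

import Mathlib

namespace Stmt2Aux

universe u

variable {G : Type u} [Group G]

/-- The subgroup generated by all `m`-th powers. -/
def K (G : Type u) [Group G] (m : ℕ) : Subgroup G :=
  Subgroup.closure (Set.range fun x : G => x ^ m)

lemma pow_mem_K (m : ℕ) (x : G) : x ^ m ∈ K G m :=
  Subgroup.subset_closure ⟨x, rfl⟩

lemma K_le_iff {m : ℕ} {H : Subgroup G} : K G m ≤ H ↔ ∀ x : G, x ^ m ∈ H := by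
  constructor
  · intro h x; exact h (pow_mem_K m x)
  · intro h
    exact (Subgroup.closure_le H).mpr (by rintro _ ⟨x, rfl⟩; exact h x)

lemma K_le_K {m k : ℕ} (h : m ∣ k) : K G k ≤ K G m := by
  rw [K_le_iff]
  intro x
  obtain ⟨c, rfl⟩ := h
  have := pow_mem_K (G := G) m (x ^ c)
  rw [← pow_mul, mul_comm c m] at this
  rwa [pow_mul] at this ⊢
  -- fallback below if needed

lemma K_normal (m : ℕ) : (K G m).Normal := by
  refine ⟨fun h hm g => ?_⟩
  have hmap : (K G m).map (MulAut.conj g).toMonoidHom ≤ K G m := by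
    rw [K, MonoidHom.map_closure, Subgroup.closure_le]
    rintro _ ⟨_, ⟨x, rfl⟩, rfl⟩
    have : (MulAut.conj g).toMonoidHom (x ^ m) = (g * x * g⁻¹) ^ m := by
      simp [conj_pow]
    rw [this]
    exact pow_mem_K m _
  have : (MulAut.conj g).toMonoidHom h ∈ K G m := hmap ⟨h, hm, rfl⟩
  simpa using this

lemma K_gcd (a b : ℕ) : K G (Nat.gcd a b) ≤ K G a ⊔ K G b := by
  rw [K_le_iff]
  intro x
  have hx : x ^ ((Nat.gcd a b : ℤ)) =
      (x ^ (a : ℤ)) ^ Nat.gcdA a b * (x ^ (b : ℤ)) ^ Nat.gcdB a b := by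
    rw [← zpow_mul, ← zpow_mul, ← zpow_add]
    congr 1
    exact_mod_cast Nat.gcd_eq_gcd_ab a b
  have h1 : x ^ (a : ℤ) ∈ K G a ⊔ K G b := by
    rw [zpow_natCast]; exact Subgroup.mem_sup_left (pow_mem_K a x)
  have h2 : x ^ (b : ℤ) ∈ K G a ⊔ K G b := by
    rw [zpow_natCast]; exact Subgroup.mem_sup_right (pow_mem_K b x)
  have : x ^ ((Nat.gcd a b : ℤ)) ∈ K G a ⊔ K G b := by
    rw [hx]
    exact mul_mem (Subgroup.zpow_mem _ h1 _) (Subgroup.zpow_mem _ h2 _)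
  rwa [zpow_natCast] at this

lemma least_dvd {H : Subgroup G} {d m : ℕ}
    (hl : IsLeast {m : ℕ | 0 < m ∧ ∀ x : G, x ^ m ∈ H} d)
    (hm : 0 < m) (h : ∀ x : G, x ^ m ∈ H) : d ∣ m := by
  have hd : 0 < d := hl.1.1
  have hKH : K G (Nat.gcd d m) ≤ H :=
    le_trans (K_gcd d m) (sup_le (K_le_iff.mpr hl.1.2) (K_le_iff.mpr h))
  have hgcd : Nat.gcd d m ∈ {m : ℕ | 0 < m ∧ ∀ x : G, x ^ m ∈ H} :=
    ⟨Nat.gcd_pos_of_pos_left _ hd, fun x => hKH (pow_mem_K _ x)⟩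
  have h1 : d ≤ Nat.gcd d m := hl.2 hgcd
  have h2 : Nat.gcd d m ≤ d := Nat.le_of_dvd hd (Nat.gcd_dvd_left d m)
  have : Nat.gcd d m = d := le_antisymm h2 h1
  exact this ▸ Nat.gcd_dvd_right d m

theorem backward : ∀ (n : ℕ) (G : Type u) [Group G] [Finite G], Nat.card G = n →
    (∀ d : ℕ, 0 < d → d ∣ n →
      ∃ H : Subgroup G, IsLeast {m : ℕ | 0 < m ∧ ∀ x : G, x ^ m ∈ H} d) →
    IsCyclic G := by
  intro n
  induction n using Nat.strong_induction_on with
  | _ n ih =>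
  intro G _ _ hn hyp
  have hn0 : 0 < n := hn ▸ Nat.card_pos
  rcases eq_or_lt_of_le (show 1 ≤ n from hn0) with h1 | h1
  · -- n = 1
    have hcard1 : Nat.card G = 1 := hn.trans h1.symm
    have : Subsingleton G := (Nat.card_eq_one_iff_unique.mp hcard1).1
    infer_instance
  -- key fact (i)
  have key : ∀ d, d ∣ n → ∀ e, 0 < e → e ∣ d → K G e ≤ K G d → e = d := by
    intro d hdn e he hed hle
    obtain ⟨H, hH⟩ := hyp d (Nat.pos_of_dvd_of_pos hdn hn0) hdn
    have hdH : K G d ≤ H := K_le_iff.mpr hH.1.2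
    have heH : ∀ x : G, x ^ e ∈ H := fun x => hdH (hle (pow_mem_K e x))
    exact Nat.dvd_antisymm hed (least_dvd hH he heH)
  -- key fact (ii): index divisibility
  have hidx : ∀ d, d ∣ n → d ∣ (K G d).index := by
    intro d
    induction d using Nat.strong_induction_on with
    | _ d ihd =>
    intro hdn
    rcases eq_or_ne d 1 with rfl | hd1
    · exact one_dvd _
    have hd0 : 0 < d := Nat.pos_of_dvd_of_pos hdn hn0
    have hpp : d.minFac.Prime := Nat.minFac_prime hd1
    set p := d.minFac with hp
    set e := d / p with he
    have hped : p * e = d := Nat.mul_div_cancel' d.minFac_dvd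
    have hed : e ∣ d := ⟨p, by rw [← hped]; ring⟩
    have hen : e ∣ n := hed.trans hdn
    have he0 : 0 < e := Nat.pos_of_dvd_of_pos hen hn0
    have helt : e < d := Nat.div_lt_self hd0 hpp.one_lt
    have hIH : e ∣ (K G e).index := ihd e helt hen
    have hne : ¬ K G e ≤ K G d := fun hle =>
      absurd (key d hdn e he0 hed hle) (Nat.ne_of_lt helt)
    have hy : ∃ y : G, y ^ e ∉ K G d := by
      by_contra hc
      push_neg at hc
      exact hne (K_le_iff.mpr hc)
    obtain ⟨y, hy⟩ := hy
    haveI : ((K G d).subgroupOf (K G e)).Normal := (K_normal d).subgroupOf _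
    set yb : K G e := ⟨y ^ e, pow_mem_K e y⟩ with hyb
    set q : (K G e) ⧸ (K G d).subgroupOf (K G e) := QuotientGroup.mk yb with hq
    have hq1 : q ≠ 1 := by
      intro h
      have : yb ∈ (K G d).subgroupOf (K G e) := (QuotientGroup.eq_one_iff yb).mp h
      rw [Subgroup.mem_subgroupOf] at this
      exact hy this
    have hqp : q ^ p = 1 := by
      have hmem : yb ^ p ∈ (K G d).subgroupOf (K G e) := by
        rw [Subgroup.mem_subgroupOf]
        show (y ^ e) ^ p ∈ K G d
        rw [← pow_mul, mul_comm e p, hped]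
        exact pow_mem_K d y
      show (QuotientGroup.mk yb : (K G e) ⧸ (K G d).subgroupOf (K G e)) ^ p = 1
      rw [← QuotientGroup.mk_pow]
      exact (QuotientGroup.eq_one_iff _).mpr hmem
    have hop : orderOf q = p := by
      have hdvd : orderOf q ∣ p := orderOf_dvd_of_pow_eq_one hqp
      rcases hpp.eq_one_or_self_of_dvd _ hdvd with h | h
      · exact absurd (orderOf_eq_one_iff.mp h) hq1
      · exact h
    have hpdvd : p ∣ (K G d).relIndex (K G e) := by
      have : orderOf q ∣ Nat.card ((K G e) ⧸ (K G d).subgroupOf (K G e)) :=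
        orderOf_dvd_natCard q
      rw [hop] at this
      rwa [Subgroup.relIndex, Subgroup.index_eq_card]
    have hKdKe : K G d ≤ K G e := K_le_K hed
    have hmul := Subgroup.relIndex_mul_index hKdKe
    have hfin : p * e ∣ (K G d).relIndex (K G e) * (K G e).index := mul_dvd_mul hpdvd hIH
    rw [hmul, hped] at hfin
    exact hfin
  -- set up N = K (n/p)
  have hn1 : n ≠ 1 := Nat.ne_of_gt h1
  have hpp : n.minFac.Prime := Nat.minFac_prime hn1
  set p := n.minFac with hp
  set m := n / p with hmdef
  have hpm : p * m = n := Nat.mul_div_cancel' n.minFac_dvd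
  have hmn : m ∣ n := ⟨p, by rw [← hpm]; ring⟩
  have hm0 : 0 < m := Nat.pos_of_dvd_of_pos hmn hn0
  have hmlt : m < n := Nat.div_lt_self hn0 hpp.one_lt
  set N := K G m with hNdef
  haveI hNnormal : N.Normal := K_normal m
  have hidxm : m ∣ N.index := hidx m hmn
  have hidxn : N.index ∣ n := hn ▸ Subgroup.index_dvd_card N
  have hneq : ¬ K G m ≤ K G n := fun hle =>
    absurd (key n dvd_rfl m hm0 hmn hle) (Nat.ne_of_lt hmlt)
  have hNbot : N ≠ ⊥ := by
    intro hb
    exact hneq (by rw [hNdef] at hb; rw [hb]; exact bot_le)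
  have hcardmul : Nat.card N * N.index = n := hn ▸ Subgroup.card_mul_index N
  have hcN : 1 < Nat.card N := by
    rcases Nat.lt_or_ge 1 (Nat.card N) with h | h
    · exact h
    · have hpos : 0 < Nat.card N := Nat.card_pos
      have : Nat.card N = 1 := le_antisymm h hpos
      exact absurd (Subgroup.card_eq_one.mp this) hNbot
  have hNidx : N.index = m := by
    obtain ⟨t, ht⟩ := hidxm
    have htp : t ∣ p := by
      have h2 : m * t ∣ m * p := by
        rw [← ht]
        rw [mul_comm m p, hpm]
        exact hidxn
      exact (mul_dvd_mul_iff_left hm0.ne').mp h2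
    rcases hpp.eq_one_or_self_of_dvd t htp with rfl | rfl
    · rw [ht, mul_one]
    · exfalso
      have hidxeq : N.index = n := by rw [ht, mul_comm, hpm]
      rw [hidxeq] at hcardmul
      have : Nat.card N = 1 := by
        have := Nat.eq_of_mul_eq_mul_right hn0 (hcardmul.trans (one_mul n).symm)
        exact this
      omega
  have hNcard : Nat.card N = p := by
    have : Nat.card N * m = p * m := by rw [← hNidx, hcardmul, ← hpm, hNidx]
    exact Nat.eq_of_mul_eq_mul_right hm0 this
  -- quotient is cyclic by induction
  have hQcard : Nat.card (G ⧸ N) = m := by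
    rw [← Subgroup.index_eq_card, hNidx]
  have hQhyp : ∀ d : ℕ, 0 < d → d ∣ m →
      ∃ H : Subgroup (G ⧸ N), IsLeast {k : ℕ | 0 < k ∧ ∀ x : G ⧸ N, x ^ k ∈ H} d := by
    intro d hd0 hdm
    refine ⟨(K G d).map (QuotientGroup.mk' N), ⟨⟨hd0, ?_⟩, ?_⟩⟩
    · intro x
      obtain ⟨y, rfl⟩ := QuotientGroup.mk'_surjective N x
      rw [← map_pow]
      exact ⟨y ^ d, pow_mem_K d y, rfl⟩
    · rintro k ⟨hk0, hk⟩
      have hNKd : N ≤ K G d := K_le_K hdm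
      have hx : ∀ x : G, x ^ k ∈ K G d := by
        intro x
        have h3 : x ^ k ∈ Subgroup.comap (QuotientGroup.mk' N)
            ((K G d).map (QuotientGroup.mk' N)) := by
          rw [Subgroup.mem_comap, map_pow]
          exact hk _
        rw [Subgroup.comap_map_eq, QuotientGroup.ker_mk', sup_eq_left.mpr hNKd] at h3
        exact h3
      have hg : K G (Nat.gcd d k) ≤ K G d :=
        le_trans (K_gcd d k) (sup_le le_rfl (K_le_iff.mpr hx))
      have hgeq := key d (hdm.trans hmn) (Nat.gcd d k)
        (Nat.gcd_pos_of_pos_left _ hd0) (Nat.gcd_dvd_left d k) hg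
      exact Nat.le_of_dvd hk0 (hgeq ▸ Nat.gcd_dvd_right d k)
  haveI hQcyc : IsCyclic (G ⧸ N) := ih m hmlt (G ⧸ N) hQcard hQhyp
  -- N is central
  haveI : Fact p.Prime := ⟨hpp⟩
  haveI : IsCyclic N := isCyclic_of_prime_card hNcard
  have hφ : ∀ g : G, (MulAut.conjNormal g : MulAut N) = 1 := by
    set φ : G →* MulAut N := MulAut.conjNormal with hφdef
    have hca : Nat.card (MulAut N) = p - 1 := by
      rw [IsCyclic.card_mulAut, hNcard, Nat.totient_prime hpp]
    have h1 : Nat.card φ.range ∣ p - 1 := hca ▸ Subgroup.card_subgroup_dvd_card φ.range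
    have h3 : Nat.card φ.range ∣ n := by
      rw [← Subgroup.index_ker φ]
      exact hn ▸ Subgroup.index_dvd_card φ.ker
    have h4 : Nat.card φ.range = 1 := by
      by_contra hne1
      have hq : (Nat.card φ.range).minFac.Prime := Nat.minFac_prime hne1
      have hq1 : (Nat.card φ.range).minFac ∣ n := (Nat.minFac_dvd _).trans h3
      have hq2 : (Nat.card φ.range).minFac ∣ p - 1 := (Nat.minFac_dvd _).trans h1
      have hle1 : p ≤ (Nat.card φ.range).minFac := Nat.minFac_le_of_dvd hq.two_le hq1
      have hp2 : 2 ≤ p := hpp.two_le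
      have hle2 : (Nat.card φ.range).minFac ≤ p - 1 :=
        Nat.le_of_dvd (by omega) hq2
      omega
    intro g
    have hmem : φ g ∈ φ.range := ⟨g, rfl⟩
    rw [Subgroup.card_eq_one.mp h4] at hmem
    exact hmem
  have hcen : N ≤ Subgroup.center G := by
    intro x hx
    rw [Subgroup.mem_center_iff]
    intro g
    have h5 : (MulAut.conjNormal g (⟨x, hx⟩ : N) : G) = x := by
      rw [hφ g]; rfl
    rw [MulAut.conjNormal_apply] at h5
    have : g * x * g⁻¹ = x := h5
    calc g * x = g * x * g⁻¹ * g := by group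
    _ = x * g := by rw [this]
  letI : CommGroup G :=
    commGroupOfCyclicCenterQuotient (QuotientGroup.mk' N)
      (by rw [QuotientGroup.ker_mk']; exact hcen)
  have hexp : Monoid.exponent G = n := by
    obtain ⟨H, hH⟩ := hyp n hn0 dvd_rfl
    have hd1 : Monoid.exponent G ∣ n := hn ▸ Group.exponent_dvd_nat_card
    have hd2 : n ≤ Monoid.exponent G := hH.2
      ⟨Monoid.exponent_pos.mpr Monoid.ExponentExists.of_finite,
       fun x => by rw [Monoid.pow_exponent_eq_one]; exact H.one_mem⟩
    exact le_antisymm (Nat.le_of_dvd hn0 hd1) hd2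
  exact IsCyclic.iff_exponent_eq_card.mpr (by rw [hexp, hn])

end Stmt2Aux

open Stmt2Aux in
theorem stmt_2 {G : Type*} [Group G] [Finite G] (n : ℕ) (hn : Nat.card G = n) :
    IsCyclic G ↔
      ∀ d : ℕ, 0 < d → d ∣ n →
        ∃ H : Subgroup G,
          IsLeast {m : ℕ | 0 < m ∧ ∀ x : G, x ^ m ∈ H} d := by
  constructor
  · rintro ⟨g, hg⟩ d hd0 hdn
    refine ⟨Subgroup.zpowers (g ^ d), ⟨⟨hd0, fun x => ?_⟩, ?_⟩⟩
    · obtain ⟨k, rfl⟩ := Subgroup.mem_zpowers_iff.mp (hg x)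
      refine Subgroup.mem_zpowers_iff.mpr ⟨k, ?_⟩
      rw [← zpow_natCast (g ^ k) d, ← zpow_natCast g d, ← zpow_mul, ← zpow_mul, mul_comm]
    · rintro k ⟨hk0, hk⟩
      obtain ⟨c, hc⟩ := Subgroup.mem_zpowers_iff.mp (hk g)
      have hog : orderOf g = n := by
        rw [← hn]; exact orderOf_eq_card_of_forall_mem_zpowers hg
      have hc' : g ^ ((d : ℤ) * c) = g ^ (k : ℤ) := by
        rw [zpow_mul, zpow_natCast g d, hc, zpow_natCast]
      have h1 : g ^ ((k : ℤ) - d * c) = 1 := by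
        rw [zpow_sub, hc']
        simp
      have h2 : (n : ℤ) ∣ (k : ℤ) - d * c := by
        rw [← hog]
        exact orderOf_dvd_iff_zpow_eq_one.mpr h1
      have hdZ : (d : ℤ) ∣ (n : ℤ) := Int.natCast_dvd_natCast.mpr hdn
      have h3 : (d : ℤ) ∣ (k : ℤ) := by
        have h4 : (d : ℤ) ∣ (k : ℤ) - d * c := hdZ.trans h2
        have h5 : (d : ℤ) ∣ (d : ℤ) * c := Dvd.intro c rfl
        have := dvd_add h4 h5
        rwa [sub_add_cancel] at this
      exact Nat.le_of_dvd hk0 (Int.natCast_dvd_natCast.mp h3)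
  · intro hyp
    exact backward n G hn hyp
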